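/- Let H ∈ ℝ^{n×n} be a positive semi-definite Hankel matrix of rank r whose last column is linearly independent of the first n−1 columns. Then the leading (r−1)×(r−1) principal submatrix H(1:r−1,1:r−1) is positive definite. -/

import Mathlib

open Finset Matrix

/-- Quadratic form of a Hankel matrix as a double range sum. -/
lemma hank_qf (n : ℕ) (h : ℕ → ℝ) (H : Matrix (Fin n) (Fin n) ℝ)
    (hH : ∀ i j, H i j = h ((i : ℕ) + (j : ℕ))) (b : ℕ → ℝ) :
    (fun i : Fin n => b i) ⬝ᵥ H *ᵥ (fun i : Fin n => b i)
      = ∑ i ∈ Finset.range n, ∑ j ∈ Finset.range n, b i * (h (i + j) * b j) := by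
  simp only [dotProduct, Matrix.mulVec, hH]
  rw [← Fin.sum_univ_eq_sum_range (fun i => ∑ j ∈ Finset.range n, b i * (h (i + j) * b j)) n]
  refine Finset.sum_congr rfl fun i _ => ?_
  rw [Finset.mul_sum, ← Fin.sum_univ_eq_sum_range (fun j => b i * (h ((i : ℕ) + j) * b j)) n]

lemma hank_mulVec (n : ℕ) (h : ℕ → ℝ) (H : Matrix (Fin n) (Fin n) ℝ)
    (hH : ∀ i j, H i j = h ((i : ℕ) + (j : ℕ))) (b : ℕ → ℝ) (i : Fin n) :
    (H *ᵥ (fun j : Fin n => b j)) i = ∑ j ∈ Finset.range n, h ((i : ℕ) + j) * b j := by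
  simp only [Matrix.mulVec, dotProduct, hH]
  rw [← Fin.sum_univ_eq_sum_range (fun j => h ((i : ℕ) + j) * b j) n]

/-- Shifting a kernel vector of a PSD Hankel matrix stays in the kernel,
provided the vector vanishes on the top two coordinates. -/
lemma hank_shift (n : ℕ) (h : ℕ → ℝ) (H : Matrix (Fin n) (Fin n) ℝ)
    (hH : ∀ i j, H i j = h ((i : ℕ) + (j : ℕ))) (hpsd : H.PosSemidef)
    (b c : ℕ → ℝ) (hc0 : c 0 = 0) (hc : ∀ j, c (j + 1) = b j)
    (hker : H *ᵥ (fun j : Fin n => b j) = 0)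
    (hsupp : ∀ j, n - 2 ≤ j → b j = 0) :
    H *ᵥ (fun j : Fin n => c j) = 0 := by
  rcases Nat.eq_zero_or_pos n with hn0 | hn
  · subst hn0; funext i; exact absurd i.isLt (by omega)
  -- step 1 : rows below the last one vanish
  have step1 : ∀ i : Fin n, (i : ℕ) < n - 1 → (H *ᵥ (fun j : Fin n => c j)) i = 0 := by
    intro i hi
    rw [hank_mulVec n h H hH c i]
    obtain ⟨m, rfl⟩ : ∃ m, n = m + 1 := ⟨n - 1, by omega⟩
    rw [Finset.sum_range_succ']
    have h2 : ∀ j ∈ Finset.range m, h ((i : ℕ) + (j + 1)) * c (j + 1)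
        = h (((i : ℕ) + 1) + j) * b j := by
      intro j _; rw [hc, show (i : ℕ) + (j + 1) = ((i : ℕ) + 1) + j by omega]
    rw [Finset.sum_congr rfl h2, hc0, mul_zero, add_zero]
    have h3 : ∑ j ∈ Finset.range m, h (((i : ℕ) + 1) + j) * b j
        = ∑ j ∈ Finset.range (m + 1), h (((i : ℕ) + 1) + j) * b j := by
      rw [Finset.sum_range_succ, hsupp m (by omega), mul_zero, add_zero]
    rw [h3, ← hank_mulVec (m + 1) h H hH b ⟨(i : ℕ) + 1, by omega⟩, hker]
    rfl
  -- step 2 : the quadratic form vanishes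
  have qf : star (fun j : Fin n => c j) ⬝ᵥ H *ᵥ (fun j : Fin n => c j) = 0 := by
    rw [star_trivial]
    refine Finset.sum_eq_zero fun i _ => ?_
    rcases lt_or_ge (i : ℕ) (n - 1) with hi | hi
    · rw [step1 i hi, mul_zero]
    · have : c (i : ℕ) = 0 := by
        rcases Nat.eq_zero_or_pos (i : ℕ) with h0 | h0
        · rw [h0, hc0]
        · obtain ⟨j, hj⟩ : ∃ j, (i : ℕ) = j + 1 := ⟨(i : ℕ) - 1, by omega⟩
          rw [hj, hc, hsupp j (by omega)]
      show c (i : ℕ) * _ = 0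
      rw [this, zero_mul]
  exact (hpsd.dotProduct_mulVec_zero_iff _).mp qf

theorem stmt11 (n r : ℕ) (hn : 0 < n) (h : ℕ → ℝ)
    (H : Matrix (Fin n) (Fin n) ℝ)
    (hH : ∀ i j, H i j = h ((i : ℕ) + (j : ℕ)))
    (hpsd : H.PosSemidef) (hrank : H.rank = r)
    (hindep : (fun i => H i ⟨n - 1, by omega⟩) ∉
      Submodule.span ℝ
        {w : Fin n → ℝ | ∃ j : Fin n, (j : ℕ) < n - 1 ∧ w = fun i => H i j}) :
    (Matrix.of fun i j : Fin (r - 1) => h ((i : ℕ) + (j : ℕ))).PosDef := by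
  have hrn : r ≤ n := by
    rw [← hrank]
    exact (H.rank_le_card_width).trans (by simp)
  rw [Matrix.posDef_iff_dotProduct_mulVec]
  constructor
  · -- Hermitian
    ext i j
    simp [Matrix.conjTranspose_apply, Nat.add_comm]
  intro x hx
  rcases Nat.lt_or_ge r 2 with hr2 | hr2
  · -- r ≤ 1 : Fin (r-1) is empty, x = 0, contradiction
    exfalso
    apply hx
    funext i
    exact absurd i.isLt (by omega)
  -- main case
  classical
  set a : ℕ → ℝ := fun j => if hj : j < r - 1 then x ⟨j, hj⟩ else 0 with ha
  have hax : (fun i : Fin (r - 1) => a (i : ℕ)) = x := by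
    funext i
    simp only [ha]
    rw [dif_pos i.isLt]
  have hzero : ∀ j, r - 1 ≤ j → a j = 0 := fun j hj => dif_neg (by omega)
  have hqf1 : star x ⬝ᵥ (Matrix.of fun i j : Fin (r - 1) => h ((i : ℕ) + (j : ℕ))) *ᵥ x
      = ∑ i ∈ Finset.range (r - 1), ∑ j ∈ Finset.range (r - 1), a i * (h (i + j) * a j) := by
    rw [star_trivial, ← hax]
    exact hank_qf (r - 1) h (Matrix.of fun i j => h ((i : ℕ) + (j : ℕ))) (fun i j => rfl) a
  have inner : ∀ i : ℕ, ∑ j ∈ Finset.range (r - 1), a i * (h (i + j) * a j)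
      = ∑ j ∈ Finset.range n, a i * (h (i + j) * a j) := fun i =>
    Finset.sum_subset (Finset.range_subset_range.mpr (by omega))
      (fun j _ hj => by
        rw [hzero j (Nat.le_of_not_lt (by simpa using hj)), mul_zero, mul_zero])
  have hqf2 : (∑ i ∈ Finset.range (r - 1), ∑ j ∈ Finset.range (r - 1), a i * (h (i + j) * a j))
      = ∑ i ∈ Finset.range n, ∑ j ∈ Finset.range n, a i * (h (i + j) * a j) := by
    calc ∑ i ∈ Finset.range (r - 1), ∑ j ∈ Finset.range (r - 1), a i * (h (i + j) * a j)
        = ∑ i ∈ Finset.range (r - 1), ∑ j ∈ Finset.range n, a i * (h (i + j) * a j) :=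
          Finset.sum_congr rfl fun i _ => inner i
      _ = ∑ i ∈ Finset.range n, ∑ j ∈ Finset.range n, a i * (h (i + j) * a j) :=
          Finset.sum_subset (Finset.range_subset_range.mpr (by omega))
            (fun i _ hi => Finset.sum_eq_zero fun j _ => by
              rw [hzero i (Nat.le_of_not_lt (by simpa using hi)), zero_mul])
  have hqf3 : (∑ i ∈ Finset.range n, ∑ j ∈ Finset.range n, a i * (h (i + j) * a j))
      = (fun i : Fin n => a (i : ℕ)) ⬝ᵥ H *ᵥ (fun i : Fin n => a (i : ℕ)) :=
    (hank_qf n h H hH a).symm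
  rw [hqf1, hqf2, hqf3]
  have hnonneg : 0 ≤ (fun i : Fin n => a (i : ℕ)) ⬝ᵥ H *ᵥ (fun i : Fin n => a (i : ℕ)) := by
    simpa using hpsd.dotProduct_mulVec_nonneg (fun i : Fin n => a (i : ℕ))
  refine hnonneg.lt_of_ne (Ne.symm ?_)
  intro h0
  have hker : H *ᵥ (fun j : Fin n => a (j : ℕ)) = 0 := by
    refine (hpsd.dotProduct_mulVec_zero_iff _).mp ?_
    rw [star_trivial]
    exact h0
  -- the top index of the support of `a`
  have hSne : (Finset.filter (fun j => a j ≠ 0) (Finset.range n)).Nonempty := by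
    by_contra hcon
    apply hx
    funext i
    have hi : (i : ℕ) ∈ Finset.range n := Finset.mem_range.mpr (by omega)
    have : ¬ a (i : ℕ) ≠ 0 := by
      intro hne
      exact hcon ⟨(i : ℕ), Finset.mem_filter.mpr ⟨hi, hne⟩⟩
    have h0' : a (i : ℕ) = 0 := not_not.mp this
    rw [← congrFun hax i] at *
    exact h0'
  set k := (Finset.filter (fun j => a j ≠ 0) (Finset.range n)).max' hSne with hkdef
  have hk_mem := Finset.max'_mem _ hSne
  rw [Finset.mem_filter, Finset.mem_range] at hk_mem
  have hk_ne : a k ≠ 0 := hk_mem.2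
  have hk_top : ∀ j, k < j → a j = 0 := by
    intro j hj
    by_contra hne
    have hjr : j < r - 1 := by
      by_contra hge
      exact hne (hzero j (by omega))
    have hjmem : j ∈ Finset.filter (fun j => a j ≠ 0) (Finset.range n) :=
      Finset.mem_filter.mpr ⟨Finset.mem_range.mpr (by omega), hne⟩
    exact absurd (Finset.le_max' _ j hjmem) (by omega)
  have hk_le : k ≤ r - 2 := by
    by_contra hgt
    exact hk_ne (hzero k (by omega))
  -- shifted vectors
  set v : ℕ → ℕ → ℝ := fun t j => if t ≤ j then a (j - t) else 0 with hv
  have claim : ∀ t, k + t ≤ n - 2 → H *ᵥ (fun j : Fin n => v t (j : ℕ)) = 0 := by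
    intro t
    induction t with
    | zero =>
      intro _
      have he : (fun j : Fin n => v 0 (j : ℕ)) = fun j : Fin n => a (j : ℕ) := by
        funext j; simp [hv]
      rw [he]; exact hker
    | succ t ih =>
      intro ht
      refine hank_shift n h H hH hpsd (v t) (v (t + 1)) ?_ ?_ (ih (by omega)) ?_
      · simp [hv]
      · intro j
        simp only [hv, Nat.succ_le_succ_iff, Nat.succ_sub_succ]
      · intro j hj
        have h1 : t ≤ j := by omega
        simp only [hv, if_pos h1]
        exact hk_top _ (by omega)
  -- a linearly independent family in the kernel
  have hkn : k ≤ n - 2 := by omega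
  set w : Fin (n - 1 - k) → (Fin n → ℝ) := fun t => fun j : Fin n => v (t : ℕ) (j : ℕ) with hw
  have hw_ker : ∀ t, H *ᵥ w t = 0 := fun t => claim (t : ℕ) (by have := t.isLt; omega)
  have hg : ∀ s : Fin (n - 1 - k), k + (s : ℕ) < n := fun s => by have := s.isLt; omega
  set g : Fin (n - 1 - k) → Fin n := fun s => ⟨k + (s : ℕ), hg s⟩ with hgdef
  set π : (Fin n → ℝ) →ₗ[ℝ] (Fin (n - 1 - k) → ℝ) := LinearMap.funLeft ℝ ℝ g with hπ
  set M' : Matrix (Fin (n - 1 - k)) (Fin (n - 1 - k)) ℝ :=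
    Matrix.of fun t s => v (t : ℕ) (k + (s : ℕ)) with hM'
  have htri : M'.BlockTriangular OrderDual.toDual := by
    intro s t hlt
    have hst : (s : ℕ) < (t : ℕ) := hlt
    show v (s : ℕ) (k + (t : ℕ)) = 0
    simp only [hv]
    rw [if_pos (by omega)]
    exact hk_top _ (by omega)
  have hdiag : ∀ t : Fin (n - 1 - k), M' t t = a k := by
    intro t
    show v (t : ℕ) (k + (t : ℕ)) = a k
    simp only [hv]
    rw [if_pos (by omega)]
    congr 1
    omega
  have hdet : M'.det ≠ 0 := by
    rw [Matrix.det_of_lowerTriangular M' htri]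
    refine Finset.prod_ne_zero_iff.mpr fun t _ => ?_
    rw [hdiag t]
    exact hk_ne
  have hrows : LinearIndependent ℝ (fun t => M' t) :=
    Matrix.linearIndependent_rows_iff_isUnit.mpr
      ((Matrix.isUnit_iff_isUnit_det M').mpr (isUnit_iff_ne_zero.mpr hdet))
  have hcomp : (⇑π) ∘ w = fun t => M' t := rfl
  have hwind : LinearIndependent ℝ w := LinearIndependent.of_comp π (by rw [hcomp]; exact hrows)
  set K := LinearMap.ker H.mulVecLin with hK
  have hmem : ∀ t, w t ∈ K := by
    intro t
    rw [hK, LinearMap.mem_ker, Matrix.mulVecLin_apply]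
    exact hw_ker t
  have hw'ind : LinearIndependent ℝ (fun t => (⟨w t, hmem t⟩ : K)) :=
    LinearIndependent.of_comp K.subtype (by exact hwind)
  have hcard : n - 1 - k ≤ Module.finrank ℝ K := by
    simpa using hw'ind.fintype_card_le_finrank
  have hrn2 := LinearMap.finrank_range_add_finrank_ker H.mulVecLin
  have hrfr : Module.finrank ℝ (LinearMap.range H.mulVecLin) = r := hrank
  rw [hrfr, Module.finrank_fintype_fun_eq_card, Fintype.card_fin, ← hK] at hrn2
  omega
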